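/- Let n be a positive integer and B = ((n+1)(n+2)/2)^{1/n}. Then J_0(0) := ∫_0^B √(u² − 2u^{n+2}/((n+1)(n+2))) du = (1/n)·((n+1)(n+2)/2)^{2/n}·Β(3/2, 2/n), where Β denotes the Beta function. -/

import Mathlib

open MeasureTheory Real Set

theorem stmt_15 (n : ℕ) (hn : 1 ≤ n)
    (Beta : ℝ → ℝ → ℝ)
    (hBeta : ∀ p q : ℝ, 0 < p → 0 < q →
      Beta p q = ∫ x in (0 : ℝ)..1, x ^ (p - 1) * (1 - x) ^ (q - 1)) :
    ∫ u in (0 : ℝ)..((((n : ℝ) + 1) * ((n : ℝ) + 2) / 2) ^ ((1 : ℝ) / n)),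
        Real.sqrt (u ^ 2 - 2 * u ^ (n + 2) / (((n : ℝ) + 1) * ((n : ℝ) + 2))) =
      (1 / (n : ℝ)) * ((((n : ℝ) + 1) * ((n : ℝ) + 2) / 2) ^ ((2 : ℝ) / n)) *
        Beta (3 / 2) (2 / (n : ℝ)) := by
  have hn0 : n ≠ 0 := by omega
  have hnR : (0:ℝ) < n := by exact_mod_cast Nat.pos_of_ne_zero hn0
  set C : ℝ := ((n : ℝ) + 1) * ((n : ℝ) + 2) / 2 with hCdef
  have hC : 0 < C := by positivity
  set B : ℝ := C ^ ((1 : ℝ) / n) with hBdef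
  have hB : 0 < B := Real.rpow_pos_of_pos hC _
  have hBn : B ^ n = C := by
    rw [hBdef, ← Real.rpow_natCast (C ^ ((1:ℝ)/n)) n, ← Real.rpow_mul hC.le]
    rw [one_div, inv_mul_cancel₀ (ne_of_gt hnR), Real.rpow_one]
  set f : ℝ → ℝ := fun u => 1 - u ^ n / C with hfdef
  set f' : ℝ → ℝ := fun u => -((n : ℝ) * u ^ (n - 1)) / C with hf'def
  set g : ℝ → ℝ := fun x => x ^ ((1:ℝ)/2) * (1 - x) ^ ((2:ℝ)/n - 1) with hgdef
  clear_value C B f f' g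
  -- derivative
  have hderiv : ∀ u ∈ Ioo (0:ℝ) B, HasDerivWithinAt f (f' u) (Ioo (0:ℝ) B) u := by
    intro u _
    simp only [hfdef, hf'def, neg_div]
    exact ((((hasDerivAt_pow n u).div_const C).const_sub 1)).hasDerivWithinAt
  -- injectivity
  have hanti : StrictAntiOn f (Ioo (0:ℝ) B) := by
    intro a ha b hb hab
    have : a ^ n < b ^ n := pow_lt_pow_left₀ hab ha.1.le hn0
    simp only [hfdef]
    have h2 : a ^ n / C < b ^ n / C := by gcongr
    linarith
  have hinj : InjOn f (Ioo (0:ℝ) B) := hanti.injOn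
  -- image
  have himg : f '' (Ioo (0:ℝ) B) = Ioo (0:ℝ) 1 := by
    ext x
    constructor
    · rintro ⟨u, ⟨hu0, huB⟩, rfl⟩
      have h1 : 0 < u ^ n / C := by positivity
      have h2 : u ^ n < C := by
        calc u ^ n < B ^ n := pow_lt_pow_left₀ huB hu0.le hn0
        _ = C := hBn
      constructor
      · simp only [hfdef]
        have : u ^ n / C < 1 := (div_lt_one hC).2 h2
        linarith
      · simp only [hfdef]; linarith
    · rintro ⟨hx0, hx1⟩
      refine ⟨(C * (1 - x)) ^ ((1:ℝ)/n), ⟨?_, ?_⟩, ?_⟩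
      · exact Real.rpow_pos_of_pos (by nlinarith) _
      · rw [hBdef]
        exact Real.rpow_lt_rpow (by nlinarith) (by nlinarith) (by positivity)
      · have hpos : (0:ℝ) < C * (1 - x) := by nlinarith
        have hpow : ((C * (1 - x)) ^ ((1:ℝ)/n)) ^ n = C * (1 - x) := by
          rw [← Real.rpow_natCast ((C * (1-x)) ^ ((1:ℝ)/n)) n, ← Real.rpow_mul hpos.le,
            one_div, inv_mul_cancel₀ (ne_of_gt hnR), Real.rpow_one]
        simp only [hfdef, hpow]
        field_simp
        ring
  -- change of variables
  have key : ∫ x in Ioo (0:ℝ) 1, g x = ∫ u in Ioo (0:ℝ) B, |f' u| • g (f u) := by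
    rw [← himg]
    exact integral_image_eq_integral_abs_deriv_smul measurableSet_Ioo hderiv hinj g
  -- pointwise identity
  have hpt : ∀ u ∈ Ioo (0:ℝ) B,
      Real.sqrt (u ^ 2 - 2 * u ^ (n + 2) / (((n : ℝ) + 1) * ((n : ℝ) + 2))) =
      (C ^ ((2:ℝ)/n) / n) * (|f' u| • g (f u)) := by
    intro u ⟨hu0, huB⟩
    have hun : 0 < u ^ n := pow_pos hu0 n
    have h2 : u ^ n < C := by
      calc u ^ n < B ^ n := pow_lt_pow_left₀ huB hu0.le hn0
      _ = C := hBn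
    have ht : 0 < 1 - u ^ n / C := by
      have : u ^ n / C < 1 := (div_lt_one hC).2 h2
      linarith
    -- LHS
    have hfac : u ^ 2 - 2 * u ^ (n + 2) / (((n : ℝ) + 1) * ((n : ℝ) + 2))
        = u ^ 2 * (1 - u ^ n / C) := by
      rw [pow_add]
      rw [hCdef]
      have h12 : ((n:ℝ) + 1) * ((n:ℝ) + 2) ≠ 0 := by positivity
      field_simp
    rw [hfac, Real.sqrt_mul (sq_nonneg u), Real.sqrt_sq hu0.le]
    -- RHS pieces
    have habs : |f' u| = (n : ℝ) * u ^ (n - 1) / C := by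
      simp only [hf'def]
      rw [abs_div, abs_neg, abs_of_nonneg (by positivity), abs_of_pos hC]
    have hg : g (f u) = Real.sqrt (1 - u ^ n / C) * (u ^ n / C) ^ ((2:ℝ)/n - 1) := by
      simp only [hgdef, hfdef]
      rw [← Real.sqrt_eq_rpow]
      ring_nf
    rw [habs, smul_eq_mul, hg]
    -- now pure rpow algebra
    have e1 : (u ^ n / C) ^ ((2:ℝ)/n - 1) = u ^ ((2:ℝ) - n) / C ^ ((2:ℝ)/n - 1) := by
      rw [Real.div_rpow (le_of_lt hun) hC.le]
      congr 1
      rw [← Real.rpow_natCast u n, ← Real.rpow_mul hu0.le]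
      congr 1
      field_simp
    have e2 : (u : ℝ) ^ (n - 1) = u ^ ((n:ℝ) - 1) := by
      rw [← Real.rpow_natCast u (n - 1), Nat.cast_sub hn, Nat.cast_one]
    have e3 : u ^ ((n:ℝ) - 1) * u ^ ((2:ℝ) - n) = u := by
      rw [← Real.rpow_add hu0]
      norm_num
    have e4 : C ^ ((2:ℝ)/n) / C ^ ((2:ℝ)/n - 1) = C := by
      rw [← Real.rpow_sub hC]
      norm_num
    rw [e1, e2]
    have e5 : C * C ^ ((2:ℝ)/n - 1) = C ^ ((2:ℝ)/n) := by
      nth_rewrite 1 [← Real.rpow_one C]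
      rw [← Real.rpow_add hC]
      norm_num
    have hCc : C ^ ((2:ℝ)/(n:ℝ) - 1) ≠ 0 := ne_of_gt (Real.rpow_pos_of_pos hC _)
    have hnne : (n:ℝ) ≠ 0 := ne_of_gt hnR
    rw [show C ^ ((2:ℝ) / (n:ℝ)) / (n:ℝ) *
        ((n:ℝ) * u ^ ((n:ℝ) - 1) / C * (Real.sqrt (1 - u ^ n / C) * (u ^ ((2:ℝ) - (n:ℝ)) / C ^ ((2:ℝ) / (n:ℝ) - 1))))
        = (u ^ ((n:ℝ) - 1) * u ^ ((2:ℝ) - (n:ℝ))) * Real.sqrt (1 - u ^ n / C) *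
          (C ^ ((2:ℝ) / (n:ℝ)) / (C * C ^ ((2:ℝ) / (n:ℝ) - 1))) * ((n:ℝ) / (n:ℝ)) from by ring]
    rw [e3, ← e5, div_self (ne_of_gt (mul_pos hC (Real.rpow_pos_of_pos hC _))), div_self hnne]
    ring
  -- assemble
  rw [intervalIntegral.integral_of_le hB.le, MeasureTheory.integral_Ioc_eq_integral_Ioo]
  rw [MeasureTheory.setIntegral_congr_fun measurableSet_Ioo hpt]
  rw [MeasureTheory.integral_const_mul]
  rw [← key]
  rw [hBeta (3/2) (2/n) (by norm_num) (by positivity)]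
  rw [intervalIntegral.integral_of_le (by norm_num : (0:ℝ) ≤ 1),
    MeasureTheory.integral_Ioc_eq_integral_Ioo]
  have : (3:ℝ)/2 - 1 = 1/2 := by norm_num
  rw [this]
  simp only [hgdef]
  ring
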